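/- For every integer n ≥ 2 and every d ∈ [0, π), the cost function c_n(d) := n − sin^{n-1}(d)/S_n(d)^{n-1} − (n−1)·S_n(d)/tan(d) is nonnegative (with the value at d = 0 interpreted as the limit, equal to 0). -/

import Mathlib

open Real Filter

noncomputable def myF (n : ℕ) (d : ℝ) : ℝ := ∫ s in (0:ℝ)..d, Real.sin s ^ (n - 1)

lemma cont_integrand (n : ℕ) : Continuous fun s : ℝ => Real.sin s ^ (n - 1) :=
  Real.continuous_sin.pow _

lemma hasDerivF (n : ℕ) (x : ℝ) : HasDerivAt (myF n) (Real.sin x ^ (n - 1)) x :=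
  intervalIntegral.integral_hasDerivAt_right
    ((cont_integrand n).intervalIntegrable _ _)
    ((cont_integrand n).aestronglyMeasurable.stronglyMeasurableAtFilter)
    (cont_integrand n).continuousAt

lemma Fpos {n : ℕ} {d : ℝ} (hd : d ∈ Set.Ioo 0 Real.pi) : 0 < myF n d := by
  apply intervalIntegral.intervalIntegral_pos_of_pos_on
    ((cont_integrand n).intervalIntegrable _ _)
  · intro x hx
    exact pow_pos (Real.sin_pos_of_pos_of_lt_pi hx.1 (hx.2.trans hd.2)) _
  · exact hd.1

lemma sin_pow_le {n : ℕ} (hn : 2 ≤ n) {d : ℝ} (hd0 : 0 ≤ d) (hdπ : d ≤ Real.pi) :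
    Real.sin d ^ n ≤ (n : ℝ) * myF n d := by
  set g : ℝ → ℝ := fun x => (n : ℝ) * myF n x - Real.sin x ^ n with hg
  have hder : ∀ x : ℝ, HasDerivAt g ((n : ℝ) * Real.sin x ^ (n - 1) * (1 - Real.cos x)) x := by
    intro x
    have h1 := (hasDerivF n x).const_mul (n : ℝ)
    have h2 : HasDerivAt (fun y => Real.sin y ^ n) ((n:ℝ) * Real.sin x ^ (n-1) * Real.cos x) x :=
      (Real.hasDerivAt_sin x).pow n
    have : HasDerivAt (fun y => (n : ℝ) * myF n y - Real.sin y ^ n)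
        ((n : ℝ) * Real.sin x ^ (n - 1) - (n:ℝ) * Real.sin x ^ (n-1) * Real.cos x) x := h1.sub h2
    convert this using 1
    ring
  have hmono : MonotoneOn g (Set.Icc 0 Real.pi) := by
    apply monotoneOn_of_deriv_nonneg (convex_Icc 0 Real.pi)
    · exact fun x _ => (hder x).continuousAt.continuousWithinAt
    · exact fun x _ => (hder x).differentiableAt.differentiableWithinAt
    · intro x hx
      rw [(hder x).deriv]
      rw [interior_Icc] at hx
      have hs : 0 ≤ Real.sin x := (Real.sin_pos_of_pos_of_lt_pi hx.1 hx.2).le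
      have hc : Real.cos x ≤ 1 := Real.cos_le_one x
      have : (0:ℝ) ≤ 1 - Real.cos x := by linarith
      exact mul_nonneg (mul_nonneg (Nat.cast_nonneg n) (pow_nonneg hs _)) this
  have h0 : g 0 = 0 := by
    simp [hg, myF, intervalIntegral.integral_same, Real.sin_zero,
      zero_pow (by omega : n ≠ 0)]
  have := hmono (Set.mem_Icc.2 ⟨le_refl 0, Real.pi_pos.le⟩) (Set.mem_Icc.2 ⟨hd0, hdπ⟩) hd0
  rw [h0] at this
  simp only [hg] at this
  linarith [this]

lemma key_ineq {c s : ℝ} (n : ℕ) (hn : 2 ≤ n) (hc : 0 < c) (hc1 : c ≤ 1) :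
    1 ≤ c ^ (-(n:ℝ)/2 - 1) * (c ^ 2 + s ^ 2 / 2) := by
  have h1 : c ^ ((n:ℝ)/2 + 1) ≤ c ^ (2:ℝ) := by
    apply Real.rpow_le_rpow_of_exponent_ge hc hc1
    have : (2:ℝ) ≤ (n:ℝ) := by exact_mod_cast hn
    linarith
  have h2 : c ^ (2:ℝ) = c ^ 2 := by
    rw [show (2:ℝ) = ((2:ℕ):ℝ) by norm_num, Real.rpow_natCast]
  have h3 : c ^ (-(n:ℝ)/2 - 1) * c ^ ((n:ℝ)/2 + 1) = 1 := by
    rw [← Real.rpow_add hc, show -(n:ℝ)/2 - 1 + ((n:ℝ)/2 + 1) = 0 by ring, Real.rpow_zero]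
  calc 1 = c ^ (-(n:ℝ)/2 - 1) * c ^ ((n:ℝ)/2 + 1) := h3.symm
    _ ≤ c ^ (-(n:ℝ)/2 - 1) * (c ^ 2 + s ^ 2 / 2) := by
        apply mul_le_mul_of_nonneg_left _ (Real.rpow_pos_of_pos hc _).le
        rw [h2] at h1
        nlinarith [sq_nonneg s]

lemma F_le {n : ℕ} (hn : 2 ≤ n) {d : ℝ} (hd0 : 0 ≤ d) (hd : d < Real.pi / 2) :
    (n : ℝ) * myF n d ≤ Real.sin d ^ n * Real.cos d ^ (-(n:ℝ)/2) := by
  obtain ⟨m, rfl⟩ : ∃ m, n = m + 2 := ⟨n - 2, by omega⟩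
  set p : ℝ := -((m:ℝ)+2)/2 with hp
  have hpeq : -(((m+2:ℕ)):ℝ)/2 = p := by rw [hp]; push_cast; ring
  rw [hpeq]
  set R : ℝ → ℝ := fun x => Real.sin x ^ (m+2) * Real.cos x ^ p - ((m+2:ℕ) : ℝ) * myF (m+2) x
    with hR
  have hder : ∀ x ∈ Set.Icc 0 d, HasDerivAt R
      ((((m+2:ℕ):ℝ) * Real.sin x ^ (m+1) * Real.cos x) * Real.cos x ^ p
        + Real.sin x ^ (m+2) * (-Real.sin x * p * Real.cos x ^ (p - 1))
        - ((m+2:ℕ) : ℝ) * Real.sin x ^ (m+1)) x := by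
    intro x hx
    have hcos : 0 < Real.cos x := Real.cos_pos_of_mem_Ioo
      ⟨lt_of_lt_of_le (by linarith [Real.pi_pos]) hx.1, lt_of_le_of_lt hx.2 hd⟩
    have h1 : HasDerivAt (fun x => Real.sin x ^ (m+2))
        (((m+2:ℕ):ℝ) * Real.sin x ^ (m+1) * Real.cos x) x :=
      (Real.hasDerivAt_sin x).pow (m+2)
    have h2 : HasDerivAt (fun x => Real.cos x ^ p) (-Real.sin x * p * Real.cos x ^ (p - 1)) x :=
      (Real.hasDerivAt_cos x).rpow_const (Or.inl hcos.ne')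
    exact (h1.mul h2).sub ((hasDerivF (m+2) x).const_mul ((m+2:ℕ) : ℝ))
  have hmono : MonotoneOn R (Set.Icc 0 d) := by
    apply monotoneOn_of_deriv_nonneg (convex_Icc 0 d)
    · exact fun x hx => (hder x hx).continuousAt.continuousWithinAt
    · intro x hx
      rw [interior_Icc] at hx
      exact (hder x (Set.mem_Icc_of_Ioo hx)).differentiableAt.differentiableWithinAt
    · intro x hx
      rw [interior_Icc] at hx
      have hx' := Set.mem_Icc_of_Ioo hx
      rw [(hder x hx').deriv]
      have hcos : 0 < Real.cos x := Real.cos_pos_of_mem_Ioo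
        ⟨lt_of_lt_of_le (by linarith [Real.pi_pos]) hx'.1, lt_of_le_of_lt hx'.2 hd⟩
      have hsin : 0 < Real.sin x := Real.sin_pos_of_pos_of_lt_pi hx.1
        (lt_trans (lt_of_lt_of_le hx.2 hd.le) (by linarith [Real.pi_pos]))
      have hkey : 1 ≤ Real.cos x ^ (p - 1) * (Real.cos x ^ 2 + Real.sin x ^ 2 / 2) := by
        have := key_ineq (m+2) (by omega) hcos (Real.cos_le_one x) (s := Real.sin x)
        rwa [show -(((m+2:ℕ)):ℝ)/2 - 1 = p - 1 by rw [hp]; push_cast; ring] at this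
      have hrw : (((m+2:ℕ):ℝ) * Real.sin x ^ (m+1) * Real.cos x) * Real.cos x ^ p
          + Real.sin x ^ (m+2) * (-Real.sin x * p * Real.cos x ^ (p - 1))
          - ((m+2:ℕ) : ℝ) * Real.sin x ^ (m+1)
          = ((m+2:ℕ):ℝ) * Real.sin x ^ (m+1) *
            (Real.cos x ^ (p-1) * (Real.cos x ^ 2 + Real.sin x ^ 2 / 2) - 1) := by
        have e1 : Real.cos x * Real.cos x ^ p = Real.cos x ^ (p - 1) * Real.cos x ^ 2 := by
          rw [show p = (p - 1) + 1 by ring, Real.rpow_add hcos, Real.rpow_one]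
          ring_nf
        rw [mul_assoc _ (Real.cos x) (Real.cos x ^ p), e1, hp]
        push_cast
        ring
      rw [hrw]
      have h1 : (0:ℝ) ≤ ((m+2:ℕ):ℝ) * Real.sin x ^ (m+1) := by positivity
      nlinarith [hkey]
  have h0 : R 0 = 0 := by
    simp [hR, myF, intervalIntegral.integral_same]
  have hle := hmono (Set.mem_Icc.2 ⟨le_refl 0, hd0⟩) (Set.mem_Icc.2 ⟨hd0, le_refl d⟩) hd0
  rw [h0] at hle
  simp only [hR] at hle
  linarith

noncomputable def Sn (n : ℕ) (d : ℝ) : ℝ :=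
  ((n : ℝ) * ∫ s in (0:ℝ)..d, Real.sin s ^ (n - 1)) ^ ((1 : ℝ) / n)

noncomputable def cn (n : ℕ) (d : ℝ) : ℝ :=
  (n : ℝ) - Real.sin d ^ (n - 1) / Sn n d ^ (n - 1) - ((n : ℝ) - 1) * Sn n d / Real.tan d

lemma Sn_eq (n : ℕ) (d : ℝ) : Sn n d = ((n:ℝ) * myF n d) ^ ((1:ℝ) / n) := rfl

lemma S_facts {n : ℕ} (hn : 2 ≤ n) {d : ℝ} (hd : d ∈ Set.Ioo 0 Real.pi) :
    0 < Sn n d ∧ Sn n d ^ n = (n : ℝ) * myF n d ∧ Real.sin d ≤ Sn n d := by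
  have hnR : (0:ℝ) < n := by positivity
  have hA : 0 < (n:ℝ) * myF n d := by
    have := Fpos (n := n) hd
    positivity
  have hS : 0 < Sn n d := by
    rw [Sn_eq]; exact Real.rpow_pos_of_pos hA _
  have hSpow : Sn n d ^ n = (n:ℝ) * myF n d := by
    rw [Sn_eq, one_div, Real.rpow_inv_natCast_pow hA.le (by omega)]
  refine ⟨hS, hSpow, ?_⟩
  have h1 : Real.sin d ^ n ≤ Sn n d ^ n := by
    rw [hSpow]; exact sin_pow_le hn hd.1.le hd.2.le
  exact le_of_pow_le_pow_left₀ (by omega) hS.le h1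

lemma S_le {n : ℕ} (hn : 2 ≤ n) {d : ℝ} (hd0 : 0 < d) (hd : d < Real.pi / 2) :
    Sn n d * Real.cos d ^ ((1:ℝ)/2) ≤ Real.sin d := by
  have hdπ : d ∈ Set.Ioo 0 Real.pi := ⟨hd0, hd.trans (by linarith [Real.pi_pos])⟩
  have hcos : 0 < Real.cos d := Real.cos_pos_of_mem_Ioo ⟨by linarith [Real.pi_pos], hd⟩
  have hsin : 0 < Real.sin d := Real.sin_pos_of_pos_of_lt_pi hdπ.1 hdπ.2
  have hA : 0 < (n:ℝ) * myF n d := by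
    have := Fpos (n := n) hdπ
    positivity
  have h1 : Sn n d ≤ (Real.sin d ^ n * Real.cos d ^ (-(n:ℝ)/2)) ^ ((1:ℝ)/n) := by
    rw [Sn_eq]
    exact Real.rpow_le_rpow hA.le (F_le hn hd0.le hd) (by positivity)
  have h2 : (Real.sin d ^ n * Real.cos d ^ (-(n:ℝ)/2)) ^ ((1:ℝ)/n)
      = Real.sin d * Real.cos d ^ (-(1:ℝ)/2) := by
    rw [Real.mul_rpow (by positivity) (Real.rpow_nonneg hcos.le _)]
    congr 1
    · rw [one_div, Real.pow_rpow_inv_natCast hsin.le (by omega)]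
    · rw [← Real.rpow_mul hcos.le]
      congr 1
      field_simp
  rw [h2] at h1
  calc Sn n d * Real.cos d ^ ((1:ℝ)/2)
      ≤ (Real.sin d * Real.cos d ^ (-(1:ℝ)/2)) * Real.cos d ^ ((1:ℝ)/2) := by
        exact mul_le_mul_of_nonneg_right h1 (Real.rpow_nonneg hcos.le _)
    _ = Real.sin d := by
        rw [mul_assoc, ← Real.rpow_add hcos]
        norm_num

lemma cn_nonneg {n : ℕ} (hn : 2 ≤ n) {d : ℝ} (hd : d ∈ Set.Ioo 0 Real.pi) : 0 ≤ cn n d := by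
  obtain ⟨hS, hSpow, hsinS⟩ := S_facts hn hd
  have hsin : 0 < Real.sin d := Real.sin_pos_of_pos_of_lt_pi hd.1 hd.2
  have hnR : (2:ℝ) ≤ (n:ℝ) := by exact_mod_cast hn
  have hterm2 : Real.sin d ^ (n-1) / Sn n d ^ (n-1) ≤ 1 := by
    rw [div_le_one (pow_pos hS _)]
    exact pow_le_pow_left₀ hsin.le hsinS _
  rcases le_or_gt (Real.cos d) 0 with hc | hc
  · have htan : Real.tan d ≤ 0 := by
      rw [Real.tan_eq_sin_div_cos]
      exact div_nonpos_of_nonneg_of_nonpos hsin.le hc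
    have h3 : ((n:ℝ)-1) * Sn n d / Real.tan d ≤ 0 :=
      div_nonpos_of_nonneg_of_nonpos (by nlinarith) htan
    unfold cn
    linarith
  · have hdlt : d < Real.pi / 2 := by
      by_contra h
      push_neg at h
      exact absurd (Real.cos_nonpos_of_pi_div_two_le_of_le h (by linarith [hd.2, Real.pi_pos]))
        (not_le.2 hc)
    have hSle := S_le hn hd.1 hdlt
    have hcr : (0:ℝ) < Real.cos d ^ ((1:ℝ)/2) := Real.rpow_pos_of_pos hc _
    have hcc : Real.cos d ^ ((1:ℝ)/2) * Real.cos d ^ ((1:ℝ)/2) = Real.cos d := by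
      rw [← Real.rpow_add hc]; norm_num
    have h2 : Sn n d ^ 2 * Real.cos d ≤ Real.sin d ^ 2 := by
      have hm := mul_self_le_mul_self (by positivity) hSle
      nlinarith [hm, hcc]
    have h3' : ((n:ℝ)-1) * Sn n d / Real.tan d
        = ((n:ℝ)-1) * Sn n d * Real.cos d / Real.sin d := by
      rw [Real.tan_eq_sin_div_cos, div_div_eq_mul_div]
    have h3 : ((n:ℝ)-1) * Sn n d * Real.cos d / Real.sin d
        ≤ ((n:ℝ)-1) * Real.sin d / Sn n d := by
      rw [div_le_div_iff₀ hsin hS]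
      nlinarith
    have h5 : ((n:ℝ)-1) * Real.sin d / Sn n d ≤ (n:ℝ)-1 := by
      rw [div_le_iff₀ hS]
      nlinarith
    unfold cn
    rw [h3']
    linarith

lemma cn_le {n : ℕ} (hn : 2 ≤ n) {d : ℝ} (hd0 : 0 < d) (hdlt : d < Real.pi / 2) :
    cn n d ≤ (n:ℝ) - (Real.cos d ^ ((1:ℝ)/2)) ^ (n-1) - ((n:ℝ)-1) * Real.cos d := by
  have hd : d ∈ Set.Ioo 0 Real.pi := ⟨hd0, hdlt.trans (by linarith [Real.pi_pos])⟩
  obtain ⟨hS, hSpow, hsinS⟩ := S_facts hn hd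
  have hsin : 0 < Real.sin d := Real.sin_pos_of_pos_of_lt_pi hd.1 hd.2
  have hc : 0 < Real.cos d := Real.cos_pos_of_mem_Ioo ⟨by linarith [Real.pi_pos], hdlt⟩
  have hnR : (2:ℝ) ≤ (n:ℝ) := by exact_mod_cast hn
  have hSle := S_le hn hd0 hdlt
  have hcr : (0:ℝ) < Real.cos d ^ ((1:ℝ)/2) := Real.rpow_pos_of_pos hc _
  -- term2 lower bound
  have ht : Real.cos d ^ ((1:ℝ)/2) ≤ Real.sin d / Sn n d := by
    rw [le_div_iff₀ hS]
    linarith [hSle]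
  have hterm2 : (Real.cos d ^ ((1:ℝ)/2)) ^ (n-1) ≤ Real.sin d ^ (n-1) / Sn n d ^ (n-1) := by
    rw [← div_pow]
    exact pow_le_pow_left₀ hcr.le ht _
  -- term3 lower bound
  have h3' : ((n:ℝ)-1) * Sn n d / Real.tan d
      = ((n:ℝ)-1) * Sn n d * Real.cos d / Real.sin d := by
    rw [Real.tan_eq_sin_div_cos, div_div_eq_mul_div]
  have hterm3 : ((n:ℝ)-1) * Real.cos d ≤ ((n:ℝ)-1) * Sn n d * Real.cos d / Real.sin d := by
    rw [le_div_iff₀ hsin]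
    have hmm : Real.sin d * Real.cos d ≤ Sn n d * Real.cos d :=
      mul_le_mul_of_nonneg_right hsinS hc.le
    nlinarith [hmm]
  unfold cn
  rw [h3']
  linarith

theorem stmt_2 (n : ℕ) (hn : 2 ≤ n) :
    (∀ d ∈ Set.Ioo (0:ℝ) Real.pi, 0 ≤ cn n d) ∧
    Tendsto (cn n) (nhdsWithin 0 (Set.Ioi 0)) (nhds 0) := by
  refine ⟨fun d hd => cn_nonneg hn hd, ?_⟩
  have hπ : (0:ℝ) < Real.pi / 2 := by positivity
  have hev : Set.Ioo (0:ℝ) (Real.pi/2) ∈ nhdsWithin (0:ℝ) (Set.Ioi 0) :=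
    Ioo_mem_nhdsGT_of_mem ⟨le_refl 0, hπ⟩
  set u : ℝ → ℝ := fun d => (n:ℝ) - (Real.cos d ^ ((1:ℝ)/2)) ^ (n-1) - ((n:ℝ)-1) * Real.cos d
    with hu
  have hcont : ContinuousAt u 0 := by
    have h1 : ContinuousAt (fun d => Real.cos d ^ ((1:ℝ)/2)) 0 :=
      Real.continuous_cos.continuousAt.rpow_const (Or.inl (by norm_num [Real.cos_zero]))
    exact (continuousAt_const.sub (h1.pow (n-1))).sub
      (continuousAt_const.mul Real.continuous_cos.continuousAt)
  have hu0 : u 0 = 0 := by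
    simp [hu, Real.cos_zero, Real.one_rpow]
  have htu : Tendsto u (nhdsWithin 0 (Set.Ioi 0)) (nhds 0) := by
    have := hcont.tendsto
    rw [hu0] at this
    exact this.mono_left nhdsWithin_le_nhds
  apply tendsto_of_tendsto_of_tendsto_of_le_of_le' (tendsto_const_nhds (x := (0:ℝ))) htu
  · filter_upwards [hev] with d hd
    exact cn_nonneg hn ⟨hd.1, hd.2.trans (by linarith [Real.pi_pos])⟩
  · filter_upwards [hev] with d hd
    exact cn_le hn hd.1 hd.2
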